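/- Let n ≥ 2. For all integers a, b ≥ 1 one has Ã_{a,b} = −Ã_{b,a} in the group algebra. (This is the type-A instance of the identity E_{a,b} = −E_{b,a} for a simply-laced root system.) -/

import Mathlib

open Finset

/-- The alternating sum `Ã(μ) = Σ_{σ ∈ S_n} sign(σ)·X^{σ·μ}` in the group
algebra `AddMonoidAlgebra ℤ (Fin n → ℤ)`, where `(σ·μ)_i = μ_{σ⁻¹(i)}`. -/
noncomputable def Atilde (n : ℕ) (μ : Fin n → ℤ) : AddMonoidAlgebra ℤ (Fin n → ℤ) :=
  ∑ σ : Equiv.Perm (Fin n),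
    (Equiv.Perm.sign σ : ℤ) • AddMonoidAlgebra.single (fun i => μ (σ⁻¹ i)) 1

/-- The staircase tuple `ρ̃ = (n−1, n−2, …, 1, 0)`. -/
def rhoT (n : ℕ) : Fin n → ℤ := fun i => (n : ℤ) - 1 - (i : ℤ)

/-- `Ã_{a,b} = Σ Ã(ρ̃ − a(e_u − e_v))` over ordered pairs `u ≠ v` with
`v − u = a − b` (the roots of `sl_n` of height `a − b`). -/
noncomputable def AtildeAB (n : ℕ) (a b : ℕ) : AddMonoidAlgebra ℤ (Fin n → ℤ) :=
  ∑ uv : Fin n × Fin n,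
    if uv.1 ≠ uv.2 ∧ ((uv.2 : ℤ) - (uv.1 : ℤ) = (a : ℤ) - (b : ℤ)) then
      Atilde n (rhoT n - (a : ℤ) • (Pi.single uv.1 1 - Pi.single uv.2 1))
    else 0


/-- Lemma 3.5 of the paper, type `A`.
For `n ≥ 2` and integers `a, b ≥ 1`, `Ã_{a,b} = −Ã_{b,a}` in the group
algebra. -/
lemma Atilde_comp (n : ℕ) (μ : Fin n → ℤ) (τ : Equiv.Perm (Fin n)) :
    Atilde n (fun i => μ (τ i)) = (Equiv.Perm.sign τ : ℤ) • Atilde n μ := by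
  unfold Atilde
  rw [Finset.smul_sum]
  apply Fintype.sum_equiv (Equiv.mulRight τ⁻¹)
  intro σ
  have h1 : (fun i => μ (τ (σ⁻¹ i))) = fun i => μ (((Equiv.mulRight τ⁻¹) σ)⁻¹ i) := by
    funext i; simp [mul_inv_rev]
  rw [h1, smul_smul]
  congr 1
  rcases Int.units_eq_one_or (Equiv.Perm.sign τ) with h | h <;>
    simp [Equiv.Perm.sign_mul, h]

theorem stmt9 (n : ℕ) (hn : 2 ≤ n) (a b : ℕ) (ha : 1 ≤ a) (hb : 1 ≤ b) :
    AtildeAB n a b = - AtildeAB n b a := by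
  unfold AtildeAB
  rw [← Finset.sum_neg_distrib]
  apply Fintype.sum_equiv (Equiv.prodComm (Fin n) (Fin n))
  rintro ⟨u, v⟩
  simp only [Equiv.prodComm_apply, Prod.fst_swap, Prod.snd_swap]
  show (if u ≠ v ∧ ((v : ℤ) - (u : ℤ) = (a : ℤ) - (b : ℤ)) then _ else 0) = -(if v ≠ u ∧ ((u : ℤ) - (v : ℤ) = (b : ℤ) - (a : ℤ)) then _ else 0)
  by_cases h : u ≠ v ∧ ((v : ℤ) - (u : ℤ) = (a : ℤ) - (b : ℤ))
  · rw [if_pos h, if_pos ⟨h.1.symm, by linarith [h.2]⟩]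
    have key : (rhoT n - (a : ℤ) • (Pi.single u 1 - Pi.single v 1))
        = fun i => ((rhoT n - (b : ℤ) • (Pi.single v 1 - Pi.single u 1) : Fin n → ℤ)) (Equiv.swap u v i) := by
      funext i
      have hv := h.2
      simp only [Pi.sub_apply, Pi.smul_apply, smul_eq_mul, rhoT, Equiv.swap_apply_def,
        Pi.single_apply]
      split_ifs <;> subst_vars <;> simp_all <;> omega
    rw [key, Atilde_comp, Equiv.Perm.sign_swap h.1]
    simp
  · rw [if_neg h, if_neg, neg_zero]
    rintro ⟨h1, h2⟩
    exact h ⟨h1.symm, by linarith⟩
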